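/- Let G be an invertible matrix approximating L⁻¹ (with L the Cholesky factor of A_inn), let Â = A_inn + A_out be SPD, and define Y := I − G Â Gᵀ. Suppose Y = VΣVᵀ is a symmetric eigendecomposition with all eigenvalues of GÂGᵀ positive. Then Â⁻¹ = GᵀG + GᵀVΣ(I − Σ)⁻¹VᵀG. -/

import Mathlib

open Matrix

lemma stmt_18_aux_posdef_conj {n : ℕ} {A B : Matrix (Fin n) (Fin n) ℝ}
    (hA : A.PosDef) (hB : IsUnit B.det) : (B * A * Bᵀ).PosDef := by
  have hAt : Aᵀ = A := by
    rw [← Matrix.conjTranspose_eq_transpose_of_trivial]; exact hA.1.eq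
  refine Matrix.PosDef.of_dotProduct_mulVec_pos ?_ ?_
  · show (B * A * Bᵀ)ᴴ = _
    rw [Matrix.conjTranspose_eq_transpose_of_trivial, Matrix.transpose_mul, Matrix.transpose_mul, transpose_transpose, hAt,
      Matrix.mul_assoc]
  · intro x hx
    have hinj : Function.Injective (Bᵀ).mulVec := by
      rw [Matrix.mulVec_injective_iff_isUnit, Matrix.isUnit_iff_isUnit_det, det_transpose]
      exact hB
    have hx' : Bᵀ *ᵥ x ≠ 0 := fun h => hx (by
      have := hinj (a₂ := 0) (by simpa using h)
      simpa using this)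
    have hpos := hA.dotProduct_mulVec_pos hx'
    have heq : star x ⬝ᵥ ((B * A * Bᵀ) *ᵥ x) = star (Bᵀ *ᵥ x) ⬝ᵥ (A *ᵥ (Bᵀ *ᵥ x)) := by
      have h1 : (B * A * Bᵀ) *ᵥ x = B *ᵥ (A *ᵥ (Bᵀ *ᵥ x)) := by
        rw [Matrix.mulVec_mulVec, Matrix.mulVec_mulVec, Matrix.mul_assoc]
      rw [h1]
      simp only [star_trivial]
      rw [Matrix.dotProduct_mulVec, ← Matrix.mulVec_transpose]
    rw [heq]
    exact hpos

/-- The LRCFSAI correction formula: Â⁻¹ = GᵀG + GᵀVΣ(I−Σ)⁻¹VᵀG (eq. 2.26). -/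
theorem stmt_18 {n : ℕ} (Ainn Aout G V S : Matrix (Fin n) (Fin n) ℝ)
    (Ahat : Matrix (Fin n) (Fin n) ℝ) (hsum : Ahat = Ainn + Aout)
    (hAhat : Ahat.PosDef) (hG : IsUnit G.det)
    (hV : V * Vᵀ = 1) (hS : S.IsDiag)
    (hdecomp : 1 - G * Ahat * Gᵀ = V * S * Vᵀ)
    (hpos : ∀ μ ∈ spectrum ℝ (G * Ahat * Gᵀ), 0 < μ) :
    Ahat⁻¹ = Gᵀ * G + Gᵀ * V * S * (1 - S)⁻¹ * Vᵀ * G := by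
  have hVtV : Vᵀ * V = 1 := mul_eq_one_comm.mp hV
  have hVdet : IsUnit Vᵀ.det := by
    have h1 : V.det * Vᵀ.det = 1 := by rw [← det_mul, hV, det_one]
    exact IsUnit.of_mul_eq_one _ (by rw [mul_comm]; exact h1)
  have hGA : G * Ahat * Gᵀ = V * (1 - S) * Vᵀ := by
    have : V * (1 - S) * Vᵀ = 1 - V * S * Vᵀ := by
      rw [Matrix.mul_sub, Matrix.sub_mul, Matrix.mul_one, hV]
    rw [this, ← hdecomp, sub_sub_cancel]
  have hP : (G * Ahat * Gᵀ).PosDef := stmt_18_aux_posdef_conj hAhat hG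
  have hOneS : (1 - S) = Vᵀ * (G * Ahat * Gᵀ) * V := by
    rw [hGA]
    have : Vᵀ * (V * (1 - S) * Vᵀ) * V = (Vᵀ * V) * (1 - S) * (Vᵀ * V) := by
      simp only [Matrix.mul_assoc]
    rw [this, hVtV, Matrix.one_mul, Matrix.mul_one]
  have hPS : (1 - S).PosDef := by
    rw [hOneS, show V = Vᵀᵀ from (transpose_transpose V).symm]
    exact stmt_18_aux_posdef_conj hP hVdet
  have hU : IsUnit (1 - S).det := isUnit_iff_ne_zero.mpr (ne_of_gt hPS.det_pos)
  have hmi : (1 - S) * (1 - S)⁻¹ = 1 := Matrix.mul_nonsing_inv _ hU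
  have key : (1 : Matrix (Fin n) (Fin n) ℝ) + S * (1 - S)⁻¹ = (1 - S)⁻¹ := by
    calc (1 : Matrix (Fin n) (Fin n) ℝ) + S * (1 - S)⁻¹
        = (1 - S) * (1 - S)⁻¹ + S * (1 - S)⁻¹ := by rw [hmi]
      _ = ((1 - S) + S) * (1 - S)⁻¹ := by rw [Matrix.add_mul]
      _ = (1 - S)⁻¹ := by rw [sub_add_cancel, Matrix.one_mul]
  set X := Gᵀ * V * (1 - S)⁻¹ * Vᵀ * G with hX
  have hRHS : Gᵀ * G + Gᵀ * V * S * (1 - S)⁻¹ * Vᵀ * G = X := by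
    have h1 : Gᵀ * G = Gᵀ * V * 1 * Vᵀ * G := by
      simp only [Matrix.mul_one, Matrix.mul_assoc, hV]
    rw [h1, hX]
    calc Gᵀ * V * 1 * Vᵀ * G + Gᵀ * V * S * (1 - S)⁻¹ * Vᵀ * G
        = Gᵀ * V * (1 + S * (1 - S)⁻¹) * Vᵀ * G := by
          simp only [Matrix.mul_add, Matrix.add_mul, Matrix.mul_assoc]
      _ = Gᵀ * V * (1 - S)⁻¹ * Vᵀ * G := by rw [key]
  have hGAX : G * (Ahat * X) = G := by
    calc G * (Ahat * X) = (G * Ahat * Gᵀ) * V * (1 - S)⁻¹ * Vᵀ * G := by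
          simp only [hX, Matrix.mul_assoc]
      _ = V * ((1 - S) * ((1 - S)⁻¹ * (Vᵀ * G))) := by
          rw [hGA]
          simp only [Matrix.mul_assoc, hVtV]
          simp [Matrix.mul_assoc]
      _ = G := by
          rw [← Matrix.mul_assoc (1 - S), hmi, Matrix.one_mul, ← Matrix.mul_assoc, hV,
            Matrix.one_mul]
  have hfin : Ahat * X = 1 := by
    calc Ahat * X = (G⁻¹ * G) * (Ahat * X) := by rw [Matrix.nonsing_inv_mul _ hG, Matrix.one_mul]
      _ = G⁻¹ * (G * (Ahat * X)) := by rw [Matrix.mul_assoc]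
      _ = G⁻¹ * G := by rw [hGAX]
      _ = 1 := Matrix.nonsing_inv_mul _ hG
  rw [Matrix.inv_eq_right_inv hfin, hRHS]
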